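/- The generalized Petersen graph P(7,2) has 14 vertices, girth 5, and domination number 5; in particular its domination number exceeds one third of its order. -/

import Mathlib

/-- `S` is a dominating set of `G`: every vertex not in `S` is adjacent to a vertex in `S`. -/
def SimpleGraph.IsDomSet {V : Type*} (G : SimpleGraph V) (S : Finset V) : Prop :=
  ∀ v, v ∉ S → ∃ u ∈ S, G.Adj u v

/-- The domination number of a finite graph. -/
noncomputable def SimpleGraph.domNum {V : Type*} [Fintype V] (G : SimpleGraph V) : ℕ :=
  sInf {n | ∃ S : Finset V, G.IsDomSet S ∧ S.card = n}

/-- The generalized Petersen graph `P(7,2)`: the outer vertices `Sum.inl i` form a `7`-cycle,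
each outer vertex `Sum.inl i` is joined to the inner vertex `Sum.inr i`, and the inner vertices
are joined by edges `Sum.inr i — Sum.inr (i+2)` (indices modulo `7`). -/
def genPetersen72 : SimpleGraph (ZMod 7 ⊕ ZMod 7) :=
  SimpleGraph.fromRel (fun x y =>
    match x, y with
    | Sum.inl i, Sum.inl j => j = i + 1
    | Sum.inl i, Sum.inr j => i = j
    | Sum.inr i, Sum.inr j => j = i + 2
    | _, _ => False)

instance : DecidableRel genPetersen72.Adj := fun x y => by
  unfold genPetersen72 SimpleGraph.fromRel
  cases x <;> cases y <;> dsimp <;> infer_instance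

instance {V : Type*} [Fintype V] [DecidableEq V] (G : SimpleGraph V) [DecidableRel G.Adj]
    (S : Finset V) : Decidable (G.IsDomSet S) := by
  unfold SimpleGraph.IsDomSet; infer_instance

/-- Indexing of the 14 vertices. -/
def pf : Fin 14 → ZMod 7 ⊕ ZMod 7 := fun i =>
  if (i : ℕ) < 7 then Sum.inl ((i : ℕ) : ZMod 7) else Sum.inr (((i : ℕ) - 7 : ℕ) : ZMod 7)

def pg : ZMod 7 ⊕ ZMod 7 → Fin 14 := fun x =>
  match x with
  | Sum.inl i => ⟨i.val, by have := i.val_lt; omega⟩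
  | Sum.inr i => ⟨i.val + 7, by have := i.val_lt; omega⟩

lemma pf_pg : ∀ v, pf (pg v) = v := by decide

lemma no_triangle : ∀ a b c : ZMod 7 ⊕ ZMod 7,
    ¬(genPetersen72.Adj a b ∧ genPetersen72.Adj b c ∧ genPetersen72.Adj c a) := by decide

set_option synthInstance.maxSize 2000 in
set_option synthInstance.maxHeartbeats 1000000 in
set_option maxHeartbeats 2000000 in
lemma no_square : ∀ a b c d : ZMod 7 ⊕ ZMod 7, genPetersen72.Adj a b → genPetersen72.Adj b c →
    genPetersen72.Adj c d → genPetersen72.Adj d a → a = c ∨ b = d := by decide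

set_option maxRecDepth 40000 in
set_option synthInstance.maxSize 2000 in
set_option synthInstance.maxHeartbeats 1000000 in
set_option maxHeartbeats 8000000 in
lemma no_dom4 : ∀ i j k l : Fin 14, i < j → j < k → k < l →
    ¬ genPetersen72.IsDomSet {pf i, pf j, pf k, pf l} := by decide

lemma dom5 : genPetersen72.IsDomSet {Sum.inl 0, Sum.inl 1, Sum.inl 2, Sum.inr 4, Sum.inr 5} := by
  decide

/-- any cycle in P(7,2) has length at least 5 -/
lemma cycle_ge5 {a : ZMod 7 ⊕ ZMod 7} (w : genPetersen72.Walk a a) (hw : w.IsCycle) :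
    5 ≤ w.length := by
  by_contra hlt
  push_neg at hlt
  have h3 := hw.three_le_length
  interval_cases h : w.length
  · -- length 3
    cases w with
    | nil => simp at h
    | cons h1 p =>
      cases p with
      | nil => simp at h
      | cons h2 q =>
        cases q with
        | nil => simp at h
        | cons h3' r =>
          cases r with
          | cons h4 s => simp [SimpleGraph.Walk.length_cons] at h
          | nil => exact no_triangle _ _ _ ⟨h1, h2, h3'⟩
  · -- length 4
    cases w with
    | nil => simp at h
    | cons h1 p =>
      cases p with
      | nil => simp at h
      | cons h2 q =>
        cases q with
        | nil => simp at h
        | cons h3' r =>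
          cases r with
          | nil => simp at h
          | cons h4 s =>
            cases s with
            | cons h5 t => simp [SimpleGraph.Walk.length_cons] at h
            | nil =>
              have hnd := hw.support_nodup
              simp [SimpleGraph.Walk.support_cons, List.nodup_cons] at hnd
              rcases no_square _ _ _ _ h1 h2 h3' h4 with hac | hbd
              · simp_all
              · simp_all

/-- an explicit 5-cycle -/
def c5 : genPetersen72.Walk (Sum.inl 0) (Sum.inl 0) :=
  SimpleGraph.Walk.cons (v := Sum.inl 1) (by decide)
    (SimpleGraph.Walk.cons (v := Sum.inl 2) (by decide)
      (SimpleGraph.Walk.cons (v := Sum.inr 2) (by decide)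
        (SimpleGraph.Walk.cons (v := Sum.inr 0) (by decide)
          (SimpleGraph.Walk.cons (v := Sum.inl 0) (by decide) SimpleGraph.Walk.nil))))

lemma c5_cycle : c5.IsCycle := by
  rw [SimpleGraph.Walk.isCycle_def]
  refine ⟨?_, by simp [c5], ?_⟩
  · rw [SimpleGraph.Walk.isTrail_def]
    decide
  · decide

lemma egirth_eq : genPetersen72.egirth = 5 := by
  refine le_antisymm ?_ ?_
  · have h1 : genPetersen72.egirth ≤ (c5.length : ℕ∞) := by
      rw [SimpleGraph.egirth]
      exact iInf_le_of_le (Sum.inl 0) (iInf_le_of_le c5 (iInf_le _ c5_cycle))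
    refine h1.trans ?_
    norm_num [c5]
  · rw [SimpleGraph.le_egirth]
    intro a w hwc
    exact_mod_cast cycle_ge5 w hwc

lemma card4_repr (T : Finset (ZMod 7 ⊕ ZMod 7)) (hT : T.card = 4) :
    ∃ i j k l : Fin 14, i < j ∧ j < k ∧ k < l ∧ T = {pf i, pf j, pf k, pf l} := by
  have hginj : Function.Injective pg := Function.LeftInverse.injective pf_pg
  set U : Finset (Fin 14) := T.image pg with hU
  have hUcard : U.card = 4 := by rw [hU, Finset.card_image_of_injective _ hginj, hT]
  have hlen : (U.sort (· ≤ ·)).length = 4 := by rw [Finset.length_sort, hUcard]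
  have hsorted : (U.sort (· ≤ ·)).Pairwise (· < ·) := U.sortedLT_sort.pairwise
  have hmem : ∀ x, x ∈ U.sort (· ≤ ·) ↔ x ∈ U := fun x => Finset.mem_sort _
  match hl : U.sort (· ≤ ·), hlen with
  | [i, j, k, l], _ =>
    rw [hl] at hsorted hmem
    simp only [List.pairwise_cons, List.mem_cons, List.not_mem_nil, or_false,
      List.Pairwise.nil, and_true] at hsorted
    refine ⟨i, j, k, l, hsorted.1 j (Or.inl rfl), hsorted.2.1 k (Or.inl rfl),
      hsorted.2.2.1 l rfl, ?_⟩
    · have hUeq : U = {i, j, k, l} := by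
        ext x
        rw [← hmem x]
        simp
      have : T = U.image pf := by
        rw [hU, Finset.image_image]
        have : pf ∘ pg = id := funext pf_pg
        rw [this, Finset.image_id]
      rw [this, hUeq]
      simp [Finset.image_insert]

lemma domNum_eq : genPetersen72.domNum = 5 := by
  have hmem : 5 ∈ {n | ∃ S : Finset (ZMod 7 ⊕ ZMod 7), genPetersen72.IsDomSet S ∧ S.card = n} :=
    ⟨{Sum.inl 0, Sum.inl 1, Sum.inl 2, Sum.inr 4, Sum.inr 5}, dom5, by decide⟩
  refine le_antisymm (Nat.sInf_le hmem) (le_csInf ⟨5, hmem⟩ ?_)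
  rintro n ⟨S, hS, rfl⟩
  by_contra hlt
  push_neg at hlt
  have hcard : S.card ≤ 4 := by omega
  obtain ⟨T, hST, hT4⟩ := Finset.exists_superset_card_eq hcard (by simp)
  have hTdom : genPetersen72.IsDomSet T := by
    intro v hv
    obtain ⟨u, hu, hadj⟩ := hS v (fun h => hv (hST h))
    exact ⟨u, hST hu, hadj⟩
  obtain ⟨i, j, k, l, hij, hjk, hkl, hTeq⟩ := card4_repr T hT4
  exact no_dom4 i j k l hij hjk hkl (hTeq ▸ hTdom)

/-- The generalized Petersen graph `P(7,2)` has `14` vertices, girth `5`, and domination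
number `5`; in particular its domination number exceeds one third of its order. -/
theorem genPetersen72_props :
    Fintype.card (ZMod 7 ⊕ ZMod 7) = 14 ∧
    genPetersen72.egirth = 5 ∧
    genPetersen72.domNum = 5 ∧
    Fintype.card (ZMod 7 ⊕ ZMod 7) < 3 * genPetersen72.domNum := by
  refine ⟨by simp, egirth_eq, domNum_eq, ?_⟩
  rw [domNum_eq]
  simp
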